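/- arXiv:2306.11424 — 2 statements merged into one kernel-verified Lean document; each statement's English description precedes it below -/
import Mathlib

section
/- With the stochastic Galerkin projection Â_{ij} = ∫_M A(μ) Φ_i(μ) Φ_j(μ) ρ(μ) dμ as above, if additionally the functions Φ_1,…,Φ_s are linearly independent in L²(M,ρ) and A(μ) is symmetric positive definite for almost all μ, then the block matrix is symmetric positive definite. -/
open MeasureTheory Matrix

lemma quad_aux {n s : ℕ} (B : Matrix (Fin n) (Fin n) ℝ) (x : Fin s × Fin n → ℝ)
    (φ : Fin s → ℝ) :
    ∑ p : Fin s × Fin n, ∑ q : Fin s × Fin n,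
      x p * (B p.2 q.2 * φ p.1 * φ q.1) * x q
    = (fun k => ∑ i, x (i, k) * φ i) ⬝ᵥ B *ᵥ (fun k => ∑ i, x (i, k) * φ i) := by
  set v : Fin n → ℝ := fun k => ∑ i, x (i, k) * φ i with hv
  set w : Fin n → ℝ := B *ᵥ v with hw
  have hmv : ∀ k, w k = ∑ q : Fin s × Fin n, B k q.2 * (x q * φ q.1) := by
    intro k
    calc w k = ∑ l, B k l * v l := rfl
    _ = ∑ l, ∑ j, B k l * (x (j, l) * φ j) := by
        refine Finset.sum_congr rfl fun l _ => ?_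
        rw [hv, Finset.mul_sum]
    _ = ∑ j, ∑ l, B k l * (x (j, l) * φ j) := Finset.sum_comm
    _ = ∑ q : Fin s × Fin n, B k q.2 * (x q * φ q.1) := by
        rw [Fintype.sum_prod_type]
  refine Eq.symm ?_
  calc (v ⬝ᵥ w)
      = ∑ k, v k * w k := rfl
    _ = ∑ k, ∑ i, x (i, k) * φ i * w k := by
        refine Finset.sum_congr rfl fun k _ => ?_
        rw [hv, Finset.sum_mul]
    _ = ∑ i, ∑ k, x (i, k) * φ i * w k := Finset.sum_comm
    _ = ∑ p : Fin s × Fin n, x p * φ p.1 * w p.2 := by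
        rw [Fintype.sum_prod_type]
    _ = ∑ p : Fin s × Fin n, ∑ q : Fin s × Fin n,
          x p * (B p.2 q.2 * φ p.1 * φ q.1) * x q := by
        refine Finset.sum_congr rfl fun p _ => ?_
        rw [hmv p.2, Finset.mul_sum]
        exact Finset.sum_congr rfl fun q _ => by ring

/-- Stochastic Galerkin projection of an a.e. symmetric positive definite
matrix-valued function is symmetric positive definite, provided the basis
functions are linearly independent in L². -/
theorem galerkin_posDef
    {M : Type*} [MeasurableSpace M] (P : Measure M) [IsProbabilityMeasure P]
    {n s : ℕ} (A : M → Matrix (Fin n) (Fin n) ℝ) (Φ : Fin s → M → ℝ)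
    (hAmeas : ∀ k l, Measurable (fun μ => A μ k l))
    (hΦmeas : ∀ i, Measurable (Φ i))
    (hint : ∀ i j k l, Integrable (fun μ => A μ k l * Φ i μ * Φ j μ) P)
    (hA : ∀ᵐ μ ∂P, (A μ).PosDef)
    (hli : ∀ c : Fin s → ℝ, (∀ᵐ μ ∂P, ∑ i, c i * Φ i μ = 0) → ∀ i, c i = 0) :
    Matrix.PosDef
      (Matrix.of (fun p q : Fin s × Fin n =>
        ∫ μ, A μ p.2 q.2 * Φ p.1 μ * Φ q.1 μ ∂P)) := by
  refine posDef_iff_dotProduct_mulVec.mpr ⟨?_, ?_⟩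
  · -- IsHermitian
    ext p q
    simp only [conjTranspose_apply, of_apply, star_trivial]
    refine integral_congr_ae ?_
    filter_upwards [hA] with μ hμ
    have := hμ.isHermitian.apply q.2 p.2
    simp only [star_trivial] at this
    rw [this]; ring
  · intro x hx
    set f : M → ℝ := fun μ => ∑ p : Fin s × Fin n, ∑ q : Fin s × Fin n,
      x p * (A μ p.2 q.2 * Φ p.1 μ * Φ q.1 μ) * x q with hf
    have hterm : ∀ (p q : Fin s × Fin n), Integrable
        (fun μ => x p * (A μ p.2 q.2 * Φ p.1 μ * Φ q.1 μ) * x q) P :=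
      fun p q => ((hint p.1 q.1 p.2 q.2).const_mul (x p)).mul_const (x q)
    have hintf : Integrable f P := by
      apply integrable_finset_sum _ (fun p _ => ?_)
      exact integrable_finset_sum _ (fun q _ => hterm p q)
    have hform : star x ⬝ᵥ (Matrix.of (fun p q : Fin s × Fin n =>
        ∫ μ, A μ p.2 q.2 * Φ p.1 μ * Φ q.1 μ ∂P)) *ᵥ x = ∫ μ, f μ ∂P := by
      rw [hf, integral_finset_sum _ (fun p _ =>
        integrable_finset_sum _ (fun q _ => hterm p q))]
      simp only [dotProduct, mulVec, of_apply, star_trivial]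
      refine Finset.sum_congr rfl fun p _ => ?_
      rw [integral_finset_sum _ (fun q _ => hterm p q), Finset.mul_sum]
      refine Finset.sum_congr rfl fun q _ => ?_
      rw [integral_mul_const, integral_const_mul]
      ring
    have hpt : ∀ μ, f μ = (fun k => ∑ i, x (i, k) * Φ i μ) ⬝ᵥ
        A μ *ᵥ (fun k => ∑ i, x (i, k) * Φ i μ) :=
      fun μ => quad_aux (A μ) x (fun i => Φ i μ)
    have hnonneg : ∀ᵐ μ ∂P, 0 ≤ f μ := by
      filter_upwards [hA] with μ hμ
      rw [hpt μ]
      simpa using hμ.posSemidef.dotProduct_mulVec_nonneg (fun k => ∑ i, x (i, k) * Φ i μ)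
    rw [hform]
    rcases lt_or_ge 0 (∫ μ, f μ ∂P) with h | h
    · exact h
    · exfalso
      have hzero : ∫ μ, f μ ∂P = 0 :=
        le_antisymm h (integral_nonneg_of_ae hnonneg)
      have hfz : ∀ᵐ μ ∂P, f μ = 0 :=
        (integral_eq_zero_iff_of_nonneg_ae hnonneg hintf).mp hzero
      apply hx
      have hvz : ∀ᵐ μ ∂P, ∀ k, ∑ i, x (i, k) * Φ i μ = 0 := by
        filter_upwards [hA, hfz] with μ hμA hμf
        intro k
        by_contra hv
        have hvne : (fun k => ∑ i, x (i, k) * Φ i μ) ≠ 0 := by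
          intro h0
          exact hv (congrFun h0 k)
        have hpos := hμA.dotProduct_mulVec_pos (x := fun k => ∑ i, x (i, k) * Φ i μ) hvne
        rw [hpt μ] at hμf
        simp only [star_trivial] at hpos
        rw [hμf] at hpos
        exact lt_irrefl 0 hpos
      funext p
      exact hli (fun i => x (i, p.2))
        (by filter_upwards [hvz] with μ hμ using hμ p.2) p.1
end

section
/- Let E, J, R, Q ∈ ℝ^{n×n} with J skew-symmetric, EᵀQ symmetric positive definite, QᵀRQ symmetric positive definite, and E, Q invertible. Then every eigenvalue of the matrix pencil λE − (J−R)Q (equivalently of E⁻¹(J−R)Q) has strictly negative real part, i.e., the pH system E ẋ = (J−R)Qx is asymptotically stable. -/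
open Matrix

private lemma quad_re_im {n : ℕ} (M : Matrix (Fin n) (Fin n) ℝ) (v : Fin n → ℂ) :
    (star v ⬝ᵥ (M.map (algebraMap ℝ ℂ)) *ᵥ v).re
      = (fun i => (v i).re) ⬝ᵥ M *ᵥ (fun i => (v i).re)
        + (fun i => (v i).im) ⬝ᵥ M *ᵥ (fun i => (v i).im)
    ∧ (star v ⬝ᵥ (M.map (algebraMap ℝ ℂ)) *ᵥ v).im
      = (fun i => (v i).re) ⬝ᵥ M *ᵥ (fun i => (v i).im)
        - (fun i => (v i).im) ⬝ᵥ M *ᵥ (fun i => (v i).re) := by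
  simp only [dotProduct, mulVec, map_apply, Pi.star_apply, Finset.mul_sum,
    Complex.re_sum, Complex.im_sum]
  constructor
  · rw [← Finset.sum_add_distrib]
    refine Finset.sum_congr rfl fun i _ => ?_
    rw [← Finset.sum_add_distrib]
    refine Finset.sum_congr rfl fun j _ => ?_
    simp only [Complex.mul_re, Complex.mul_im, RCLike.star_def, Complex.conj_re,
      Complex.conj_im, Complex.ofReal_re, Complex.ofReal_im, Complex.coe_algebraMap]
    ring
  · rw [← Finset.sum_sub_distrib]
    refine Finset.sum_congr rfl fun i _ => ?_
    rw [← Finset.sum_sub_distrib]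
    refine Finset.sum_congr rfl fun j _ => ?_
    simp only [Complex.mul_re, Complex.mul_im, RCLike.star_def, Complex.conj_re,
      Complex.conj_im, Complex.ofReal_re, Complex.ofReal_im, Complex.coe_algebraMap]
    ring

private lemma quad_re_pos {n : ℕ} {M : Matrix (Fin n) (Fin n) ℝ} (hM : M.PosDef)
    {v : Fin n → ℂ} (hv : v ≠ 0) :
    0 < (star v ⬝ᵥ (M.map (algebraMap ℝ ℂ)) *ᵥ v).re := by
  rw [(quad_re_im M v).1]
  have hnn : ∀ x : Fin n → ℝ, 0 ≤ x ⬝ᵥ M *ᵥ x := fun x => by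
    have := hM.posSemidef.dotProduct_mulVec_nonneg x; simpa using this
  have hpos : ∀ x : Fin n → ℝ, x ≠ 0 → 0 < x ⬝ᵥ M *ᵥ x := fun x hx0 => by
    have := hM.dotProduct_mulVec_pos hx0; simpa using this
  by_cases hx : (fun i => (v i).re) = (0 : Fin n → ℝ)
  · have hy : (fun i => (v i).im) ≠ (0 : Fin n → ℝ) := by
      intro hy
      apply hv
      funext i
      have h1 := congrFun hx i
      have h2 := congrFun hy i
      exact Complex.ext (by simpa using h1) (by simpa using h2)
    have := hpos _ hy
    nlinarith [hnn (fun i => (v i).re)]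
  · have := hpos _ hx
    nlinarith [hnn (fun i => (v i).im)]

private lemma quad_im_zero {n : ℕ} {M : Matrix (Fin n) (Fin n) ℝ} (hM : Mᵀ = M)
    (v : Fin n → ℂ) :
    (star v ⬝ᵥ (M.map (algebraMap ℝ ℂ)) *ᵥ v).im = 0 := by
  rw [(quad_re_im M v).2]
  have key : ∀ x y : Fin n → ℝ, x ⬝ᵥ M *ᵥ y = y ⬝ᵥ M *ᵥ x := fun x y => by
    rw [dotProduct_mulVec, ← mulVec_transpose, hM, dotProduct_comm]
  rw [key]
  ring

private lemma quad_skew_re_zero {n : ℕ} {M : Matrix (Fin n) (Fin n) ℝ} (hM : Mᵀ = -M)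
    (v : Fin n → ℂ) :
    (star v ⬝ᵥ (M.map (algebraMap ℝ ℂ)) *ᵥ v).re = 0 := by
  rw [(quad_re_im M v).1]
  have key : ∀ x : Fin n → ℝ, x ⬝ᵥ M *ᵥ x = 0 := fun x => by
    have h : x ⬝ᵥ M *ᵥ x = -(x ⬝ᵥ M *ᵥ x) := by
      conv_lhs => rw [dotProduct_mulVec, ← mulVec_transpose, hM, dotProduct_comm,
        neg_mulVec, dotProduct_neg]
    linarith
  rw [key, key]
  ring

/-- Asymptotic stability of the pH system E ẋ = (J−R)Qx: with J
skew-symmetric, EᵀQ and QᵀRQ symmetric positive definite, and E, Q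
invertible, every eigenvalue of the pencil λE − (J−R)Q has strictly negative
real part. -/
theorem pH_asymptotic_stability {n : ℕ} (E J R Q : Matrix (Fin n) (Fin n) ℝ)
    (hJ : Jᵀ = -J) (hEQ : (Eᵀ * Q).PosDef) (hR : (Qᵀ * R * Q).PosDef)
    (hE : IsUnit E.det) (hQ : IsUnit Q.det)
    (lam : ℂ)
    (hlam : (lam • E.map (algebraMap ℝ ℂ)
      - ((J - R) * Q).map (algebraMap ℝ ℂ)).det = 0) :
    lam.re < 0 := by
  set f := algebraMap ℝ ℂ
  obtain ⟨v, hv0, hv⟩ := (Matrix.exists_mulVec_eq_zero_iff).2 hlam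
  have hv' : lam • (E.map f *ᵥ v) = ((J - R) * Q).map f *ᵥ v := by
    have := hv
    rw [sub_mulVec, smul_mulVec, sub_eq_zero] at this
    exact this
  -- symmetry facts over ℝ
  have hEQ_symm : (Eᵀ * Q)ᵀ = Eᵀ * Q := by
    have := hEQ.1
    simpa [Matrix.IsHermitian, conjTranspose_eq_transpose_of_trivial] using this
  have hR_symm : (Qᵀ * R * Q)ᵀ = Qᵀ * R * Q := by
    have := hR.1
    simpa [Matrix.IsHermitian, conjTranspose_eq_transpose_of_trivial] using this
  have hQE_symm : (Qᵀ * E)ᵀ = Qᵀ * E := by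
    rw [transpose_mul, transpose_transpose, hEQ_symm.symm]
    rw [transpose_mul, transpose_transpose]
  have hQE_pos : (Qᵀ * E).PosDef := by
    have := hEQ.transpose
    rwa [transpose_mul, transpose_transpose] at this
  have hQJQ_skew : (Qᵀ * J * Q)ᵀ = -(Qᵀ * J * Q) := by
    rw [transpose_mul, transpose_mul, transpose_transpose, hJ]
    simp [Matrix.mul_assoc]
  -- key scalar equation
  have key : lam * (star v ⬝ᵥ ((Qᵀ * E).map f *ᵥ v))
      = star v ⬝ᵥ ((Qᵀ * J * Q).map f *ᵥ v)
        - star v ⬝ᵥ ((Qᵀ * R * Q).map f *ᵥ v) := by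
    have h2 := congrArg (fun w => star v ⬝ᵥ (Qᵀ.map f *ᵥ w)) hv'
    simp only [mulVec_smul, dotProduct_smul, smul_eq_mul, Matrix.mulVec_mulVec] at h2
    have e1 : Qᵀ.map f * E.map f = (Qᵀ * E).map f := (Matrix.map_mul (f := f)).symm
    have e2 : Qᵀ.map f * ((J - R) * Q).map f = (Qᵀ * J * Q).map f - (Qᵀ * R * Q).map f := by
      rw [← Matrix.map_mul (f := f), ← Matrix.map_sub _ (fun a b => map_sub f a b)]
      congr 1
      noncomm_ring
    rw [e1, e2, sub_mulVec, dotProduct_sub] at h2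
    exact h2
  have ha_pos : 0 < (star v ⬝ᵥ ((Qᵀ * E).map f *ᵥ v)).re := quad_re_pos hQE_pos hv0
  have ha_im : (star v ⬝ᵥ ((Qᵀ * E).map f *ᵥ v)).im = 0 := quad_im_zero hQE_symm v
  have hb_pos : 0 < (star v ⬝ᵥ ((Qᵀ * R * Q).map f *ᵥ v)).re := quad_re_pos hR hv0
  have hc_re : (star v ⬝ᵥ ((Qᵀ * J * Q).map f *ᵥ v)).re = 0 := quad_skew_re_zero hQJQ_skew v
  have hre := congrArg Complex.re key
  simp only [Complex.mul_re, Complex.sub_re, ha_im, hc_re, mul_zero, sub_zero, zero_sub] at hre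
  nlinarith
end
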